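/- Fix integers n_A, n_B ≥ 1. For M ∈ ℕ define N(M) = ∑_{k=1}^{n_A} C(n_A,k)·((M/2)^k − M/2 + 1)·M^{k−1} + ∑_{l=1}^{n_B} C(n_B,l)·((M/2)^l − M/2 + 1)·M^{l−1} (the number of non-trivial non-removable singular fade subspaces) and R(M) = ∑_{k=2}^{n_A+n_B} (C(n_A+n_B,k) − C(n_A,k) − C(n_B,k))·((M/2)^k − M/2 + 1)·M^{k−1} (the number of removable singular fade subspaces), where C(a,b) = 0 when b > a. Then the real sequence λ ↦ N(2^λ)/(N(2^λ) + R(2^λ)) tends to 0 as λ → ∞; that is, the fraction of non-removable singular fade subspaces among all non-trivial singular fade subspaces tends to zero for large M. -/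

import Mathlib

open Filter Finset

lemma ratio_lt (p s : ℕ) (h : p < s) :
    Tendsto (fun lam : ℕ => ((2:ℝ)^lam)^p / ((2:ℝ)^lam)^s) atTop (nhds 0) := by
  have key : ∀ lam : ℕ, ((2:ℝ)^lam)^p / ((2:ℝ)^lam)^s = (((1:ℝ)/2)^(s-p))^lam := by
    intro lam
    have hs : s = p + (s - p) := by omega
    have h2 : (((1:ℝ)/2)^(s-p))^lam = (((2:ℝ)^lam)^(s-p))⁻¹ := by
      simp only [one_div, inv_pow]
      rw [← pow_mul, ← pow_mul, Nat.mul_comm]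
    rw [h2, hs, pow_add]
    field_simp
    simp
  simp only [key]
  exact tendsto_pow_atTop_nhds_zero_of_lt_one (by positivity)
    (pow_lt_one₀ (by norm_num) (by norm_num) (by omega))

lemma term_eq (c : ℝ) (m s lam : ℕ) :
    c * (((2:ℝ)^lam/2)^(m+1) - (2:ℝ)^lam/2 + 1) * ((2:ℝ)^lam)^(m+1-1) / ((2:ℝ)^lam)^s
    = c * (((1:ℝ)/2)^(m+1) * (((2:ℝ)^lam)^(2*m+1) / ((2:ℝ)^lam)^s)
        - (1/2) * (((2:ℝ)^lam)^(m+1)/((2:ℝ)^lam)^s)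
        + ((2:ℝ)^lam)^m/((2:ℝ)^lam)^s) := by
  have hx : ((2:ℝ)^lam) ≠ 0 := by positivity
  have h1 : ((2:ℝ)^lam)^(2*m+1) = ((2:ℝ)^lam)^(m+1) * ((2:ℝ)^lam)^m := by
    rw [← pow_add]; congr 1; omega
  simp only [Nat.add_sub_cancel, h1]
  field_simp
  ring

lemma term_tendsto_zero (c : ℝ) (k s : ℕ) (hk : 1 ≤ k) (h : 2*k - 1 < s) :
    Tendsto (fun lam : ℕ =>
        c * (((2:ℝ)^lam/2)^k - (2:ℝ)^lam/2 + 1) * ((2:ℝ)^lam)^(k-1) / ((2:ℝ)^lam)^s)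
      atTop (nhds 0) := by
  obtain ⟨m, rfl⟩ : ∃ m, k = m + 1 := ⟨k - 1, by omega⟩
  simp only [term_eq]
  have := ((((ratio_lt (2*m+1) s (by omega)).const_mul ((1/2:ℝ)^(m+1))).sub
      ((ratio_lt (m+1) s (by omega)).const_mul (1/2:ℝ))).add
      (ratio_lt m s (by omega))).const_mul c
  simpa using this

lemma term_tendsto_top (c : ℝ) (m : ℕ) (hm : 1 ≤ m) :
    Tendsto (fun lam : ℕ =>
        c * (((2:ℝ)^lam/2)^(m+1) - (2:ℝ)^lam/2 + 1) * ((2:ℝ)^lam)^(m+1-1) / ((2:ℝ)^lam)^(2*m+1))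
      atTop (nhds (c * ((1:ℝ)/2)^(m+1))) := by
  simp only [term_eq]
  have h1 : ∀ lam : ℕ, ((2:ℝ)^lam)^(2*m+1) / ((2:ℝ)^lam)^(2*m+1) = 1 := fun lam =>
    div_self (by positivity)
  simp only [h1]
  have := ((((tendsto_const_nhds :
      Tendsto (fun _ : ℕ => ((1:ℝ)/2)^(m+1) * 1) atTop (nhds (((1:ℝ)/2)^(m+1) * 1)))).sub
      ((ratio_lt (m+1) (2*m+1) (by omega)).const_mul (1/2:ℝ))).add
      (ratio_lt m (2*m+1) (by omega))).const_mul c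
  simpa using this

/-- The number of non-trivial non-removable singular fade subspaces for an
`n_A × n_B` system with `M`-PSK, as a real number. -/
noncomputable def numNonRemovable (nA nB M : ℕ) : ℝ :=
  (∑ k ∈ Finset.Icc 1 nA,
      (nA.choose k : ℝ) * (((M : ℝ) / 2) ^ k - (M : ℝ) / 2 + 1) * (M : ℝ) ^ (k - 1)) +
  (∑ l ∈ Finset.Icc 1 nB,
      (nB.choose l : ℝ) * (((M : ℝ) / 2) ^ l - (M : ℝ) / 2 + 1) * (M : ℝ) ^ (l - 1))

/-- The number of removable singular fade subspaces for an `n_A × n_B` system with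
`M`-PSK, as a real number. -/
noncomputable def numRemovable (nA nB M : ℕ) : ℝ :=
  ∑ k ∈ Finset.Icc 2 (nA + nB),
    (((nA + nB).choose k : ℝ) - (nA.choose k : ℝ) - (nB.choose k : ℝ)) *
      (((M : ℝ) / 2) ^ k - (M : ℝ) / 2 + 1) * (M : ℝ) ^ (k - 1)

theorem fraction_nonremovable_tendsto_zero (nA nB : ℕ) (hnA : 1 ≤ nA) (hnB : 1 ≤ nB) :
    Filter.Tendsto
      (fun lam : ℕ =>
        numNonRemovable nA nB (2 ^ lam) /
          (numNonRemovable nA nB (2 ^ lam) + numRemovable nA nB (2 ^ lam)))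
      Filter.atTop (nhds 0) := by
  obtain ⟨m, hn⟩ : ∃ m, nA + nB = m + 1 := ⟨nA + nB - 1, by omega⟩
  have hm : 1 ≤ m := by omega
  have hcast : ∀ lam : ℕ, ((2^lam : ℕ) : ℝ) = (2:ℝ)^lam := by intro lam; push_cast; ring
  -- numerator limit
  have hA : Tendsto (fun lam : ℕ => numNonRemovable nA nB (2^lam) / ((2:ℝ)^lam)^(2*m+1))
      atTop (nhds 0) := by
    unfold numNonRemovable
    simp only [hcast, add_div, Finset.sum_div]
    have h1 : Tendsto (fun lam : ℕ => ∑ k ∈ Icc 1 nA,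
        (nA.choose k : ℝ) * (((2:ℝ)^lam/2)^k - (2:ℝ)^lam/2 + 1) * ((2:ℝ)^lam)^(k-1)
          / ((2:ℝ)^lam)^(2*m+1)) atTop (nhds 0) := by
      rw [show (0:ℝ) = ∑ k ∈ Icc 1 nA, (0:ℝ) by simp]
      refine tendsto_finset_sum _ fun k hk => ?_
      simp only [mem_Icc] at hk
      exact term_tendsto_zero _ k (2*m+1) hk.1 (by omega)
    have h2 : Tendsto (fun lam : ℕ => ∑ k ∈ Icc 1 nB,
        (nB.choose k : ℝ) * (((2:ℝ)^lam/2)^k - (2:ℝ)^lam/2 + 1) * ((2:ℝ)^lam)^(k-1)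
          / ((2:ℝ)^lam)^(2*m+1)) atTop (nhds 0) := by
      rw [show (0:ℝ) = ∑ k ∈ Icc 1 nB, (0:ℝ) by simp]
      refine tendsto_finset_sum _ fun k hk => ?_
      simp only [mem_Icc] at hk
      exact term_tendsto_zero _ k (2*m+1) hk.1 (by omega)
    simpa using h1.add h2
  -- removable limit
  have hR : Tendsto (fun lam : ℕ => numRemovable nA nB (2^lam) / ((2:ℝ)^lam)^(2*m+1))
      atTop (nhds (((1:ℝ)/2)^(m+1))) := by
    unfold numRemovable
    simp only [hcast, Finset.sum_div, hn]
    have hsplit : ∀ lam : ℕ, (∑ k ∈ Icc 2 (m+1),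
        (((m+1).choose k : ℝ) - (nA.choose k : ℝ) - (nB.choose k : ℝ)) *
          (((2:ℝ)^lam/2)^k - (2:ℝ)^lam/2 + 1) * ((2:ℝ)^lam)^(k-1) / ((2:ℝ)^lam)^(2*m+1))
        = (∑ k ∈ Icc 2 m,
        (((m+1).choose k : ℝ) - (nA.choose k : ℝ) - (nB.choose k : ℝ)) *
          (((2:ℝ)^lam/2)^k - (2:ℝ)^lam/2 + 1) * ((2:ℝ)^lam)^(k-1) / ((2:ℝ)^lam)^(2*m+1))
        + (((m+1).choose (m+1) : ℝ) - (nA.choose (m+1) : ℝ) - (nB.choose (m+1) : ℝ)) *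
          (((2:ℝ)^lam/2)^(m+1) - (2:ℝ)^lam/2 + 1) * ((2:ℝ)^lam)^(m+1-1) / ((2:ℝ)^lam)^(2*m+1) := by
      intro lam
      exact Finset.sum_Icc_succ_top (by omega) _
    simp only [hsplit]
    have hA0 : nA.choose (m+1) = 0 := Nat.choose_eq_zero_of_lt (by omega)
    have hB0 : nB.choose (m+1) = 0 := Nat.choose_eq_zero_of_lt (by omega)
    simp only [Nat.choose_self, hA0, hB0, Nat.cast_one, Nat.cast_zero, sub_zero]
    have htail : Tendsto (fun lam : ℕ => ∑ k ∈ Icc 2 m,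
        (((m+1).choose k : ℝ) - (nA.choose k : ℝ) - (nB.choose k : ℝ)) *
          (((2:ℝ)^lam/2)^k - (2:ℝ)^lam/2 + 1) * ((2:ℝ)^lam)^(k-1) / ((2:ℝ)^lam)^(2*m+1))
        atTop (nhds 0) := by
      rw [show (0:ℝ) = ∑ k ∈ Icc 2 m, (0:ℝ) by simp]
      refine tendsto_finset_sum _ fun k hk => ?_
      simp only [mem_Icc] at hk
      exact term_tendsto_zero _ k (2*m+1) (by omega) (by omega)
    have htop := term_tendsto_top 1 m hm
    simpa using htail.add htop
  have hB : Tendsto (fun lam : ℕ =>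
      (numNonRemovable nA nB (2^lam) + numRemovable nA nB (2^lam)) / ((2:ℝ)^lam)^(2*m+1))
      atTop (nhds (((1:ℝ)/2)^(m+1))) := by
    simp only [add_div]
    simpa using hA.add hR
  have key := hA.div hB (by positivity)
  rw [zero_div] at key
  refine key.congr fun lam => ?_
  have hx : ((2:ℝ)^lam)^(2*m+1) ≠ 0 := by positivity
  simp only [Pi.div_apply]
  rw [div_div_div_eq, mul_comm (((2:ℝ)^lam)^(2*m+1)), mul_div_mul_right _ _ hx]
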